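/- Let W be an affine Weyl group acting on alcoves, x, y ∈ W, s ∈ S with xs > x. Then I_{x,sy} ⊆ I_{xs,y}, where for u, v ∈ W, I_{u,v} is the set of positive roots α such that some hyperplane orthogonal to α separates both A_0 from vA_0 and vA_0 from uvA_0. -/

import Mathlib

namespace Stmt15

noncomputable section
open scoped RealInnerProductSpace

variable {r : ℕ}

/-- The coroot pairing `⟨x, α̌⟩ = 2(x,α)/(α,α)`. -/
def pairing (x α : EuclideanSpace ℝ (Fin r)) : ℝ := 2 * ⟪x, α⟫ / ⟪α, α⟫

/-- The union of the affine hyperplanes `H_{α,n}`, `α ∈ Φ⁺`, `n ∈ ℤ`. -/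
def hypUnion (Φp : Finset (EuclideanSpace ℝ (Fin r))) : Set (EuclideanSpace ℝ (Fin r)) :=
  {x | ∃ α ∈ Φp, ∃ n : ℤ, pairing x α = (n : ℝ)}

/-- An alcove is a connected component of the complement of the hyperplane arrangement. -/
def IsAlcove (Φp : Finset (EuclideanSpace ℝ (Fin r)))
    (A : Set (EuclideanSpace ℝ (Fin r))) : Prop :=
  ∃ x, x ∉ hypUnion Φp ∧ A = connectedComponentIn (hypUnion Φp)ᶜ x

/-- The hyperplane `H_{α,n}` separates the sets `A` and `A'`. -/
def Separates (α : EuclideanSpace ℝ (Fin r)) (n : ℤ)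
    (A A' : Set (EuclideanSpace ℝ (Fin r))) : Prop :=
  ((∀ x ∈ A, pairing x α < (n : ℝ)) ∧ (∀ x ∈ A', (n : ℝ) < pairing x α)) ∨
  ((∀ x ∈ A, (n : ℝ) < pairing x α) ∧ (∀ x ∈ A', pairing x α < (n : ℝ)))

/-- The fundamental alcove `A₀`. -/
def fundAlcove (Φp : Finset (EuclideanSpace ℝ (Fin r))) : Set (EuclideanSpace ℝ (Fin r)) :=
  {x | ∀ α ∈ Φp, 0 < pairing x α ∧ pairing x α < 1}

/-- `I_{x,y}`: the set of positive roots `α` such that some hyperplane orthogonal to `α`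
separates both `A₀` from `yA₀` and `yA₀` from `xyA₀`. -/
def Iset {B W : Type*} [Group W] {M : CoxeterMatrix B} (cs : CoxeterSystem M W)
    (Φp : Finset (EuclideanSpace ℝ (Fin r)))
    (e : W ≃ {A : Set (EuclideanSpace ℝ (Fin r)) // IsAlcove Φp A})
    (x y : W) : Set (EuclideanSpace ℝ (Fin r)) :=
  {α | α ∈ Φp ∧ ∃ n : ℤ,
    Separates α n (↑(e 1)) (↑(e y)) ∧ Separates α n (↑(e y)) (↑(e (x * y)))}

/-! ### Auxiliary machinery -/

local notation "V" => EuclideanSpace ℝ (Fin r)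

lemma comb_lt {p q m s t : ℝ} (hp : p < m) (hq : q < m) (hs : 0 ≤ s) (ht : 0 ≤ t)
    (hst : s + t = 1) : s * p + t * q < m := by
  rcases eq_or_lt_of_le hs with h | h
  · have hts : t = 1 := by linarith
    rw [← h, hts]; nlinarith
  · have h1 : s * p < s * m := mul_lt_mul_of_pos_left hp h
    have h2 : t * q ≤ t * m := mul_le_mul_of_nonneg_left hq.le ht
    have h3 : s * m + t * m = m := by rw [← add_mul, hst, one_mul]
    linarith

lemma pairing_smul_add (a b α : V) (s t : ℝ) :
    pairing (s • a + t • b) α = s * pairing a α + t * pairing b α := by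
  unfold pairing
  rw [inner_add_left, real_inner_smul_left, real_inner_smul_left]
  ring

lemma pairing_sub_smul (x y α : V) (c : ℝ) :
    pairing (x - c • y) α = pairing x α - c * pairing y α := by
  unfold pairing
  rw [inner_sub_left, real_inner_smul_left]
  ring

lemma pairing_neg_right (x γ : V) : pairing x (-γ) = - pairing x γ := by
  unfold pairing
  rw [inner_neg_right, inner_neg_neg]
  ring

lemma pairing_self {α : V} (h : ⟪α, α⟫ ≠ 0) : pairing α α = 2 := by
  unfold pairing; rw [div_eq_iff h]

lemma continuous_pairing (α : V) : Continuous fun x : V => pairing x α := by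
  unfold pairing
  exact (continuous_const.mul (continuous_id.inner continuous_const)).div_const _

/-- `A` lies strictly below level `c` for the root `α`. -/
def Bel (α : V) (c : ℝ) (A : Set V) : Prop := ∀ z ∈ A, pairing z α < c

/-- `A` lies strictly above level `c` for the root `α`. -/
def Abv (α : V) (c : ℝ) (A : Set V) : Prop := ∀ z ∈ A, c < pairing z α

lemma separates_iff (α : V) (n : ℤ) (A A' : Set V) :
    Separates α n A A' ↔ (Bel α n A ∧ Abv α n A') ∨ (Abv α n A ∧ Bel α n A') := Iff.rfl

lemma not_bel_abv {α : V} {c : ℝ} {A : Set V} (hA : A.Nonempty) : ¬ (Bel α c A ∧ Abv α c A) :=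
  fun ⟨h1, h2⟩ => absurd (h1 _ hA.choose_spec) (not_lt.2 (h2 _ hA.choose_spec).le)

variable {Φp : Finset (EuclideanSpace ℝ (Fin r))} {A : Set (EuclideanSpace ℝ (Fin r))}

lemma IsAlcove.nonempty' (h : IsAlcove Φp A) : A.Nonempty := by
  obtain ⟨x, hx, rfl⟩ := h
  exact ⟨x, mem_connectedComponentIn hx⟩

lemma IsAlcove.subset_compl (h : IsAlcove Φp A) : A ⊆ (hypUnion Φp)ᶜ := by
  obtain ⟨x, hx, rfl⟩ := h; exact connectedComponentIn_subset _ _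

lemma IsAlcove.preconn (h : IsAlcove Φp A) : IsPreconnected A := by
  obtain ⟨x, hx, rfl⟩ := h; exact isPreconnected_connectedComponentIn

lemma IsAlcove.pairing_ne (h : IsAlcove Φp A) {β : V} (hβ : β ∈ Φp) (m : ℤ) {z : V}
    (hz : z ∈ A) : pairing z β ≠ (m : ℝ) :=
  fun he => (h.subset_compl hz) ⟨β, hβ, m, he⟩

lemma IsAlcove.dichotomy (h : IsAlcove Φp A) {β : V} (hβ : β ∈ Φp) (m : ℤ) :
    Bel β m A ∨ Abv β m A := by
  by_contra hcon
  push_neg at hcon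
  obtain ⟨h1, h2⟩ := hcon
  unfold Bel at h1
  unfold Abv at h2
  push_neg at h1 h2
  obtain ⟨z₁, hz₁, hg₁⟩ := h1
  obtain ⟨z₂, hz₂, hg₂⟩ := h2
  have himg : IsPreconnected ((fun z => pairing z β) '' A) :=
    h.preconn.image _ (continuous_pairing β).continuousOn
  have hm : (m : ℝ) ∈ (fun z => pairing z β) '' A :=
    himg.Icc_subset ⟨z₂, hz₂, rfl⟩ ⟨z₁, hz₁, rfl⟩ ⟨hg₂, hg₁⟩
  obtain ⟨z, hz, hzm⟩ := hm
  exact h.pairing_ne hβ m hz hzm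

lemma IsAlcove.eq_of_mem {B : Set V} (hA : IsAlcove Φp A) (hB : IsAlcove Φp B) {x : V}
    (hxA : x ∈ A) (hxB : x ∈ B) : A = B := by
  obtain ⟨a, ha, rfl⟩ := hA
  obtain ⟨b, hb, rfl⟩ := hB
  rw [connectedComponentIn_eq hxA, connectedComponentIn_eq hxB]

lemma IsAlcove.mem_of_sides (h : IsAlcove Φp A) {a : V} (ha : a ∈ A) {z : V}
    (hz : ∀ β ∈ Φp, ∀ m : ℤ,
      (pairing a β < m → pairing z β < m) ∧ ((m : ℝ) < pairing a β → (m : ℝ) < pairing z β)) :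
    z ∈ A := by
  set S : Set V := {w | ∀ β ∈ Φp, ∀ m : ℤ,
      (pairing a β < m → pairing w β < m) ∧ ((m : ℝ) < pairing a β → (m : ℝ) < pairing w β)}
    with hSdef
  have hconv : Convex ℝ S := by
    intro w₁ hw₁ w₂ hw₂ s t hs ht hst
    intro β hβ m
    have h₁ := hw₁ β hβ m
    have h₂ := hw₂ β hβ m
    have hp : pairing (s • w₁ + t • w₂) β = s * pairing w₁ β + t * pairing w₂ β :=
      pairing_smul_add _ _ _ _ _
    constructor
    · intro hlt
      rw [hp]; exact comb_lt (h₁.1 hlt) (h₂.1 hlt) hs ht hst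
    · intro hlt
      rw [hp]
      have := comb_lt (neg_lt_neg (h₁.2 hlt)) (neg_lt_neg (h₂.2 hlt)) hs ht hst
      linarith
  have hsub : S ⊆ (hypUnion Φp)ᶜ := by
    intro w hw hmem
    obtain ⟨β, hβ, m, heq⟩ := hmem
    rcases lt_or_gt_of_ne (h.pairing_ne hβ m ha) with hlt | hgt
    · exact absurd heq (ne_of_lt ((hw β hβ m).1 hlt))
    · exact absurd heq.symm (ne_of_lt ((hw β hβ m).2 hgt))
  have haS : a ∈ S := fun β hβ m => ⟨id, id⟩
  have hzS : z ∈ S := hz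
  obtain ⟨x₀, hx₀, rfl⟩ := h
  have hsubcc : S ⊆ connectedComponentIn (hypUnion Φp)ᶜ a :=
    hconv.isPreconnected.subset_connectedComponentIn haS hsub
  exact (connectedComponentIn_eq ha) ▸ hsubcc hzS

/-! ### Affine reflections -/

/-- The reflection in the affine hyperplane `H_{α,c}`. -/
def reflct (α : V) (c : ℝ) (x : V) : V := x - (pairing x α - c) • α

/-- The linear reflection associated to the root `α`. -/
def Sa (α γ : V) : V := γ - pairing γ α • α

lemma inner_self_ne {Φ : Finset (EuclideanSpace ℝ (Fin r))} (h0 : (0 : V) ∉ Φ) {γ : V}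
    (hγ : γ ∈ Φ) : ⟪γ, γ⟫ ≠ 0 := by
  intro h
  exact h0 (by rwa [inner_self_eq_zero.mp h] at hγ)

lemma Sa_inner {α : V} (hα : ⟪α, α⟫ ≠ 0) (γ : V) : ⟪Sa α γ, Sa α γ⟫ = ⟪γ, γ⟫ := by
  unfold Sa pairing
  rw [real_inner_sub_sub_self, real_inner_smul_right, real_inner_smul_left,
    real_inner_smul_right]
  set G := ⟪γ, α⟫ with hG
  set Aa := ⟪α, α⟫ with hAa
  field_simp
  ring

lemma pairing_neg_left (x α : V) : pairing (-x) α = - pairing x α := by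
  unfold pairing
  rw [inner_neg_left]
  ring

lemma Sa_neg {α : V} (γ : V) : Sa α (-γ) = -(Sa α γ) := by
  unfold Sa
  rw [pairing_neg_left]
  module

lemma Sa_invol {α : V} (hα : ⟪α, α⟫ ≠ 0) (γ : V) : Sa α (Sa α γ) = γ := by
  unfold Sa
  rw [pairing_sub_smul, pairing_self hα]
  module

lemma pairing_reflct {α γ : V} (hα : ⟪α, α⟫ ≠ 0) (hγ : ⟪γ, γ⟫ ≠ 0) (c : ℝ) (x : V) :
    pairing (reflct α c x) γ = pairing x (Sa α γ) + c * pairing α γ := by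
  have hs : pairing x (Sa α γ) = (2 * ⟪x, γ⟫ - pairing γ α * (2 * ⟪x, α⟫)) / ⟪γ, γ⟫ := by
    show 2 * ⟪x, Sa α γ⟫ / ⟪Sa α γ, Sa α γ⟫ = _
    rw [Sa_inner hα γ]
    unfold Sa
    rw [inner_sub_right, real_inner_smul_right]
    ring
  unfold reflct
  rw [pairing_sub_smul, hs]
  unfold pairing
  rw [real_inner_comm γ α, real_inner_comm α γ]
  field_simp
  ring

lemma pairing_reflct_alpha {α : V} (hα : ⟪α, α⟫ ≠ 0) (c : ℝ) (x : V) :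
    pairing (reflct α c x) α = 2 * c - pairing x α := by
  unfold reflct
  rw [pairing_sub_smul, pairing_self hα]
  ring

lemma pairing_alpha_Sa {α γ : V} (hα : ⟪α, α⟫ ≠ 0) (hγ : ⟪γ, γ⟫ ≠ 0) :
    pairing α (Sa α γ) = - pairing α γ := by
  have h2 : pairing (reflct α 0 α) γ = pairing α (Sa α γ) := by
    rw [pairing_reflct hα hγ 0 α]
    ring
  rw [← h2]
  have : reflct α 0 α = -α := by
    unfold reflct
    rw [pairing_self hα]
    module
  rw [this, pairing_neg_left]

lemma reflct_invol {α : V} (hα : ⟪α, α⟫ ≠ 0) (c : ℝ) (x : V) :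
    reflct α c (reflct α c x) = x := by
  have h := pairing_reflct_alpha hα c x
  unfold reflct at h ⊢
  rw [h]
  module

lemma reflct_fix {α : V} {c : ℝ} {x : V} (hx : pairing x α = c) : reflct α c x = x := by
  unfold reflct
  rw [hx]
  simp

lemma reflct_continuous (α : V) (c : ℝ) : Continuous (reflct α c) := by
  unfold reflct
  have h1 : Continuous fun x : V => (pairing x α - c) :=
    (continuous_pairing α).sub continuous_const
  exact continuous_id.sub (h1.smul continuous_const)

/-! ### The reflection permutes the hyperplanes and the alcoves -/

lemma floor_pairing {Φ : Finset (EuclideanSpace ℝ (Fin r))}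
    (hcrys : ∀ α ∈ Φ, ∀ β ∈ Φ, ∃ k : ℤ, pairing β α = (k : ℝ)) {α δ : V}
    (hα : α ∈ Φ) (hδ : δ ∈ Φ) : (⌊pairing α δ⌋ : ℝ) = pairing α δ := by
  obtain ⟨k, hk⟩ := hcrys δ hδ α hα
  rw [hk, Int.floor_intCast]

lemma reflct_mem_hypUnion {Φ Φp : Finset (EuclideanSpace ℝ (Fin r))}
    (hΦp : ↑Φp ⊆ (Φ : Set (EuclideanSpace ℝ (Fin r)))) (h0 : (0 : V) ∉ Φ)
    (hcrys : ∀ α ∈ Φ, ∀ β ∈ Φ, ∃ k : ℤ, pairing β α = (k : ℝ))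
    (hrefl : ∀ α ∈ Φ, ∀ β ∈ Φ, β - pairing β α • α ∈ Φ)
    (htri : ∀ γ ∈ Φ, γ ∈ Φp ∨ -γ ∈ Φp)
    {α : V} (hαp : α ∈ Φp) (n : ℤ) {z : V} (hz : z ∈ hypUnion Φp) :
    reflct α (n : ℝ) z ∈ hypUnion Φp := by
  obtain ⟨β, hβp, m, hm⟩ := hz
  have hαΦ : α ∈ Φ := hΦp hαp
  have hβΦ : β ∈ Φ := hΦp hβp
  have hαα := inner_self_ne h0 hαΦ
  have hββ := inner_self_ne h0 hβΦ
  have hδΦ : Sa α β ∈ Φ := hrefl α hαΦ β hβΦ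
  have hδδ := inner_self_ne h0 hδΦ
  obtain ⟨k, hk⟩ := hcrys (Sa α β) hδΦ α hαΦ
  have hpair : pairing (reflct α (n : ℝ) z) (Sa α β) = (m : ℝ) + (n : ℝ) * (k : ℝ) := by
    rw [pairing_reflct hαα hδδ, Sa_invol hαα β, hm, hk]
  rcases htri (Sa α β) hδΦ with hp | hp
  · exact ⟨Sa α β, hp, m + n * k, by rw [hpair]; push_cast; ring⟩
  · exact ⟨-Sa α β, hp, -(m + n * k), by rw [pairing_neg_right, hpair]; push_cast; ring⟩

lemma reflct_compl_mem {Φ Φp : Finset (EuclideanSpace ℝ (Fin r))}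
    (hΦp : ↑Φp ⊆ (Φ : Set (EuclideanSpace ℝ (Fin r)))) (h0 : (0 : V) ∉ Φ)
    (hcrys : ∀ α ∈ Φ, ∀ β ∈ Φ, ∃ k : ℤ, pairing β α = (k : ℝ))
    (hrefl : ∀ α ∈ Φ, ∀ β ∈ Φ, β - pairing β α • α ∈ Φ)
    (htri : ∀ γ ∈ Φ, γ ∈ Φp ∨ -γ ∈ Φp)
    {α : V} (hαp : α ∈ Φp) (n : ℤ) {z : V} (hz : z ∈ (hypUnion Φp)ᶜ) :
    reflct α (n : ℝ) z ∈ (hypUnion Φp)ᶜ := by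
  intro hmem
  apply hz
  have h2 := reflct_mem_hypUnion hΦp h0 hcrys hrefl htri hαp n hmem
  rwa [reflct_invol (inner_self_ne h0 (hΦp hαp))] at h2

lemma reflct_ccIn_subset {Φ Φp : Finset (EuclideanSpace ℝ (Fin r))}
    (hΦp : ↑Φp ⊆ (Φ : Set (EuclideanSpace ℝ (Fin r)))) (h0 : (0 : V) ∉ Φ)
    (hcrys : ∀ α ∈ Φ, ∀ β ∈ Φ, ∃ k : ℤ, pairing β α = (k : ℝ))
    (hrefl : ∀ α ∈ Φ, ∀ β ∈ Φ, β - pairing β α • α ∈ Φ)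
    (htri : ∀ γ ∈ Φ, γ ∈ Φp ∨ -γ ∈ Φp)
    {α : V} (hαp : α ∈ Φp) (n : ℤ) {x₀ : V} (hx₀ : x₀ ∈ (hypUnion Φp)ᶜ) :
    reflct α (n : ℝ) '' connectedComponentIn (hypUnion Φp)ᶜ x₀ ⊆
      connectedComponentIn (hypUnion Φp)ᶜ (reflct α (n : ℝ) x₀) := by
  apply IsPreconnected.subset_connectedComponentIn
  · exact isPreconnected_connectedComponentIn.image _ (reflct_continuous α (n : ℝ)).continuousOn
  · exact ⟨x₀, mem_connectedComponentIn hx₀, rfl⟩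
  · rintro w ⟨u, hu, rfl⟩
    exact reflct_compl_mem hΦp h0 hcrys hrefl htri hαp n (connectedComponentIn_subset _ _ hu)

lemma reflct_ccIn {Φ Φp : Finset (EuclideanSpace ℝ (Fin r))}
    (hΦp : ↑Φp ⊆ (Φ : Set (EuclideanSpace ℝ (Fin r)))) (h0 : (0 : V) ∉ Φ)
    (hcrys : ∀ α ∈ Φ, ∀ β ∈ Φ, ∃ k : ℤ, pairing β α = (k : ℝ))
    (hrefl : ∀ α ∈ Φ, ∀ β ∈ Φ, β - pairing β α • α ∈ Φ)
    (htri : ∀ γ ∈ Φ, γ ∈ Φp ∨ -γ ∈ Φp)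
    {α : V} (hαp : α ∈ Φp) (n : ℤ) {x₀ : V} (hx₀ : x₀ ∈ (hypUnion Φp)ᶜ) :
    reflct α (n : ℝ) '' connectedComponentIn (hypUnion Φp)ᶜ x₀ =
      connectedComponentIn (hypUnion Φp)ᶜ (reflct α (n : ℝ) x₀) := by
  have hαα := inner_self_ne h0 (hΦp hαp)
  apply Set.Subset.antisymm (reflct_ccIn_subset hΦp h0 hcrys hrefl htri hαp n hx₀)
  have h2 := reflct_ccIn_subset hΦp h0 hcrys hrefl htri hαp n
    (reflct_compl_mem hΦp h0 hcrys hrefl htri hαp n hx₀)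
  rw [reflct_invol hαα] at h2
  intro w hw
  have hmem : reflct α (n : ℝ) w ∈ connectedComponentIn (hypUnion Φp)ᶜ x₀ := h2 ⟨w, hw, rfl⟩
  exact ⟨reflct α (n : ℝ) w, hmem, reflct_invol hαα _ _⟩

lemma reflct_alcove {Φ Φp : Finset (EuclideanSpace ℝ (Fin r))}
    (hΦp : ↑Φp ⊆ (Φ : Set (EuclideanSpace ℝ (Fin r)))) (h0 : (0 : V) ∉ Φ)
    (hcrys : ∀ α ∈ Φ, ∀ β ∈ Φ, ∃ k : ℤ, pairing β α = (k : ℝ))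
    (hrefl : ∀ α ∈ Φ, ∀ β ∈ Φ, β - pairing β α • α ∈ Φ)
    (htri : ∀ γ ∈ Φ, γ ∈ Φp ∨ -γ ∈ Φp)
    {α : V} (hαp : α ∈ Φp) (n : ℤ) {A : Set (EuclideanSpace ℝ (Fin r))}
    (hA : IsAlcove Φp A) : IsAlcove Φp (reflct α (n : ℝ) '' A) := by
  obtain ⟨x₀, hx₀, rfl⟩ := hA
  exact ⟨reflct α (n : ℝ) x₀, reflct_compl_mem hΦp h0 hcrys hrefl htri hαp n hx₀,
    reflct_ccIn hΦp h0 hcrys hrefl htri hαp n hx₀⟩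

/-! ### The image of a wall under the reflection -/

open Classical in
/-- Image of the wall `H_{q.1, q.2}` under the reflection `reflct α n`. -/
noncomputable def wimg (Φp : Finset (EuclideanSpace ℝ (Fin r))) (α : V) (n : ℤ)
    (q : (EuclideanSpace ℝ (Fin r)) × ℤ) : (EuclideanSpace ℝ (Fin r)) × ℤ :=
  if Sa α q.1 ∈ Φp then (Sa α q.1, q.2 - n * ⌊pairing α q.1⌋)
  else (-Sa α q.1, -(q.2 - n * ⌊pairing α q.1⌋))

section Wimg


lemma wimg_fst_mem {Φ Φp : Finset (EuclideanSpace ℝ (Fin r))}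
    (hΦp : ↑Φp ⊆ (Φ : Set (EuclideanSpace ℝ (Fin r)))) (h0 : (0 : V) ∉ Φ)
    (hcrys : ∀ α ∈ Φ, ∀ β ∈ Φ, ∃ k : ℤ, pairing β α = (k : ℝ))
    (hrefl : ∀ α ∈ Φ, ∀ β ∈ Φ, β - pairing β α • α ∈ Φ)
    (htri : ∀ γ ∈ Φ, γ ∈ Φp ∨ -γ ∈ Φp)
    (hnn : ∀ γ ∈ Φp, -γ ∉ Φp)
    {α : V} (hαp : α ∈ Φp) (n : ℤ) {q : (EuclideanSpace ℝ (Fin r)) × ℤ} (hq : q.1 ∈ Φp) :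
    (wimg Φp α n q).1 ∈ Φp := by
  classical
  have hS : Sa α q.1 ∈ Φ := hrefl α (hΦp hαp) q.1 (hΦp hq)
  unfold wimg
  split_ifs with h
  · exact h
  · rcases htri _ hS with h' | h'
    · exact absurd h' h
    · exact h'

lemma wimg_shift {Φ Φp : Finset (EuclideanSpace ℝ (Fin r))}
    (hΦp : ↑Φp ⊆ (Φ : Set (EuclideanSpace ℝ (Fin r)))) (h0 : (0 : V) ∉ Φ)
    (hcrys : ∀ α ∈ Φ, ∀ β ∈ Φ, ∃ k : ℤ, pairing β α = (k : ℝ))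
    (hrefl : ∀ α ∈ Φ, ∀ β ∈ Φ, β - pairing β α • α ∈ Φ)
    (htri : ∀ γ ∈ Φ, γ ∈ Φp ∨ -γ ∈ Φp)
    (hnn : ∀ γ ∈ Φp, -γ ∉ Φp)
    {α : V} (hαp : α ∈ Φp) (n : ℤ) {β : V} (hβ : β ∈ Φp) (m : ℤ) :
    (∀ w : V, pairing (reflct α (n : ℝ) w) β - (m : ℝ) =
      pairing w (wimg Φp α n (β, m)).1 - ((wimg Φp α n (β, m)).2 : ℝ)) ∨
    (∀ w : V, pairing (reflct α (n : ℝ) w) β - (m : ℝ) =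
      -(pairing w (wimg Φp α n (β, m)).1 - ((wimg Φp α n (β, m)).2 : ℝ))) := by
  classical
  have hαα := inner_self_ne h0 (hΦp hαp)
  have hββ := inner_self_ne h0 (hΦp hβ)
  have hfl : (⌊pairing α β⌋ : ℝ) = pairing α β := floor_pairing hcrys (hΦp hαp) (hΦp hβ)
  have hkey : ∀ w : V, pairing (reflct α (n : ℝ) w) β - (m : ℝ) =
      pairing w (Sa α β) - ((m - n * ⌊pairing α β⌋ : ℤ) : ℝ) := by
    intro w
    rw [pairing_reflct hαα hββ]
    push_cast
    rw [hfl]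
    ring
  unfold wimg
  split_ifs with h
  · left
    intro w
    simpa using hkey w
  · right
    intro w
    have h2 := hkey w
    have h3 : pairing w (-Sa α β) = - pairing w (Sa α β) := pairing_neg_right w (Sa α β)
    simp only
    rw [h3]
    push_cast at h2 ⊢
    linarith

lemma wimg_invol {Φ Φp : Finset (EuclideanSpace ℝ (Fin r))}
    (hΦp : ↑Φp ⊆ (Φ : Set (EuclideanSpace ℝ (Fin r)))) (h0 : (0 : V) ∉ Φ)
    (hcrys : ∀ α ∈ Φ, ∀ β ∈ Φ, ∃ k : ℤ, pairing β α = (k : ℝ))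
    (hrefl : ∀ α ∈ Φ, ∀ β ∈ Φ, β - pairing β α • α ∈ Φ)
    (htri : ∀ γ ∈ Φ, γ ∈ Φp ∨ -γ ∈ Φp)
    (hnn : ∀ γ ∈ Φp, -γ ∉ Φp)
    {α : V} (hαp : α ∈ Φp) (n : ℤ) {q : (EuclideanSpace ℝ (Fin r)) × ℤ} (hq : q.1 ∈ Φp) :
    wimg Φp α n (wimg Φp α n q) = q := by
  classical
  obtain ⟨β, m⟩ := q
  have hβ : β ∈ Φp := hq
  have hαα := inner_self_ne h0 (hΦp hαp)
  have hββ := inner_self_ne h0 (hΦp hβ)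
  have hfl : (⌊pairing α β⌋ : ℝ) = pairing α β := floor_pairing hcrys (hΦp hαp) (hΦp hβ)
  have h1 : Sa α (Sa α β) = β := Sa_invol hαα β
  have h2 : pairing α (Sa α β) = - pairing α β := pairing_alpha_Sa hαα hββ
  have h2' : ⌊pairing α (Sa α β)⌋ = -⌊pairing α β⌋ := by
    rw [h2, ← hfl, ← Int.cast_neg, Int.floor_intCast, Int.floor_intCast]
  by_cases hc : Sa α β ∈ Φp
  · have e1 : wimg Φp α n (β, m) = (Sa α β, m - n * ⌊pairing α β⌋) := by
      unfold wimg; rw [if_pos hc]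
    rw [e1]
    have e2 : Sa α (Sa α β) ∈ Φp := by rw [h1]; exact hβ
    unfold wimg
    rw [if_pos e2]
    simp only [h1, h2']
    refine Prod.ext rfl ?_
    simp only
    ring
  · have e1 : wimg Φp α n (β, m) = (-Sa α β, -(m - n * ⌊pairing α β⌋)) := by
      unfold wimg; rw [if_neg hc]
    rw [e1]
    have e3 : Sa α (-Sa α β) = -β := by rw [Sa_neg, h1]
    have e2 : Sa α (-Sa α β) ∉ Φp := by rw [e3]; exact hnn β hβ
    have h4 : pairing α (-Sa α β) = pairing α β := by
      rw [pairing_neg_right, h2]; ring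
    unfold wimg
    rw [if_neg e2]
    simp only [e3, h4, neg_neg]
    refine Prod.ext rfl ?_
    simp only
    ring

lemma wimg_self {Φ Φp : Finset (EuclideanSpace ℝ (Fin r))}
    (hΦp : ↑Φp ⊆ (Φ : Set (EuclideanSpace ℝ (Fin r)))) (h0 : (0 : V) ∉ Φ)
    (hcrys : ∀ α ∈ Φ, ∀ β ∈ Φ, ∃ k : ℤ, pairing β α = (k : ℝ))
    (hrefl : ∀ α ∈ Φ, ∀ β ∈ Φ, β - pairing β α • α ∈ Φ)
    (htri : ∀ γ ∈ Φ, γ ∈ Φp ∨ -γ ∈ Φp)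
    (hnn : ∀ γ ∈ Φp, -γ ∉ Φp)
    {α : V} (hαp : α ∈ Φp) (n : ℤ) : wimg Φp α n (α, n) = (α, n) := by
  classical
  have hαα := inner_self_ne h0 (hΦp hαp)
  have hSa : Sa α α = -α := by
    unfold Sa
    rw [pairing_self hαα]
    module
  have hfl : ⌊pairing α α⌋ = 2 := by
    rw [pairing_self hαα]
    norm_num
  have hneg : Sa α α ∉ Φp := by rw [hSa]; exact hnn α hαp
  unfold wimg
  rw [if_neg hneg]
  simp only [hSa, hfl, neg_neg]
  refine Prod.ext rfl ?_
  simp only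
  ring

end Wimg

/-! ### Transport of separation along the reflection -/

lemma sep_reflct_iff {Φ Φp : Finset (EuclideanSpace ℝ (Fin r))}
    (hΦp : ↑Φp ⊆ (Φ : Set (EuclideanSpace ℝ (Fin r)))) (h0 : (0 : V) ∉ Φ)
    (hcrys : ∀ α ∈ Φ, ∀ β ∈ Φ, ∃ k : ℤ, pairing β α = (k : ℝ))
    (hrefl : ∀ α ∈ Φ, ∀ β ∈ Φ, β - pairing β α • α ∈ Φ)
    (htri : ∀ γ ∈ Φ, γ ∈ Φp ∨ -γ ∈ Φp)
    (hnn : ∀ γ ∈ Φp, -γ ∉ Φp)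
    {α : V} (hαp : α ∈ Φp) (n : ℤ)  {β : V} (hβ : β ∈ Φp) (m : ℤ)
    (A C : Set (EuclideanSpace ℝ (Fin r))) :
    Separates β m (reflct α (n : ℝ) '' A) (reflct α (n : ℝ) '' C) ↔
      Separates (wimg Φp α n (β, m)).1 (wimg Φp α n (β, m)).2 A C := by
  rcases wimg_shift hΦp h0 hcrys hrefl htri hnn hαp n hβ m with h | h
  · have c1 : ∀ w : V, (pairing (reflct α (n : ℝ) w) β < (m : ℝ) ↔
        pairing w (wimg Φp α n (β, m)).1 < ((wimg Φp α n (β, m)).2 : ℝ)) := by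
      intro w
      have := h w
      constructor <;> intro <;> linarith
    have c2 : ∀ w : V, ((m : ℝ) < pairing (reflct α (n : ℝ) w) β ↔
        ((wimg Φp α n (β, m)).2 : ℝ) < pairing w (wimg Φp α n (β, m)).1) := by
      intro w
      have := h w
      constructor <;> intro <;> linarith
    unfold Separates
    simp only [Set.forall_mem_image]
    constructor
    · rintro (⟨h1, h2⟩ | ⟨h1, h2⟩)
      · exact Or.inl ⟨fun w hw => (c1 w).mp (h1 hw), fun w hw => (c2 w).mp (h2 hw)⟩
      · exact Or.inr ⟨fun w hw => (c2 w).mp (h1 hw), fun w hw => (c1 w).mp (h2 hw)⟩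
    · rintro (⟨h1, h2⟩ | ⟨h1, h2⟩)
      · exact Or.inl ⟨fun w hw => (c1 w).mpr (h1 w hw), fun w hw => (c2 w).mpr (h2 w hw)⟩
      · exact Or.inr ⟨fun w hw => (c2 w).mpr (h1 w hw), fun w hw => (c1 w).mpr (h2 w hw)⟩
  · have c1 : ∀ w : V, (pairing (reflct α (n : ℝ) w) β < (m : ℝ) ↔
        ((wimg Φp α n (β, m)).2 : ℝ) < pairing w (wimg Φp α n (β, m)).1) := by
      intro w
      have := h w
      constructor <;> intro <;> linarith
    have c2 : ∀ w : V, ((m : ℝ) < pairing (reflct α (n : ℝ) w) β ↔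
        pairing w (wimg Φp α n (β, m)).1 < ((wimg Φp α n (β, m)).2 : ℝ)) := by
      intro w
      have := h w
      constructor <;> intro <;> linarith
    unfold Separates
    simp only [Set.forall_mem_image]
    constructor
    · rintro (⟨h1, h2⟩ | ⟨h1, h2⟩)
      · exact Or.inr ⟨fun w hw => (c1 w).mp (h1 hw), fun w hw => (c2 w).mp (h2 hw)⟩
      · exact Or.inl ⟨fun w hw => (c2 w).mp (h1 hw), fun w hw => (c1 w).mp (h2 hw)⟩
    · rintro (⟨h1, h2⟩ | ⟨h1, h2⟩)
      · exact Or.inr ⟨fun w hw => (c2 w).mpr (h1 w hw), fun w hw => (c1 w).mpr (h2 w hw)⟩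
      · exact Or.inl ⟨fun w hw => (c1 w).mpr (h1 w hw), fun w hw => (c2 w).mpr (h2 w hw)⟩

lemma exu_reflct {Φ Φp : Finset (EuclideanSpace ℝ (Fin r))}
    (hΦp : ↑Φp ⊆ (Φ : Set (EuclideanSpace ℝ (Fin r)))) (h0 : (0 : V) ∉ Φ)
    (hcrys : ∀ α ∈ Φ, ∀ β ∈ Φ, ∃ k : ℤ, pairing β α = (k : ℝ))
    (hrefl : ∀ α ∈ Φ, ∀ β ∈ Φ, β - pairing β α • α ∈ Φ)
    (htri : ∀ γ ∈ Φ, γ ∈ Φp ∨ -γ ∈ Φp)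
    (hnn : ∀ γ ∈ Φp, -γ ∉ Φp)
    {α : V} (hαp : α ∈ Φp) (n : ℤ)  {A C : Set (EuclideanSpace ℝ (Fin r))}
    (h : ∃! q : (EuclideanSpace ℝ (Fin r)) × ℤ, q.1 ∈ Φp ∧ Separates q.1 q.2 A C) :
    ∃! q : (EuclideanSpace ℝ (Fin r)) × ℤ, q.1 ∈ Φp ∧
      Separates q.1 q.2 (reflct α (n : ℝ) '' A) (reflct α (n : ℝ) '' C) := by
  obtain ⟨q₀, ⟨hq₀p, hq₀s⟩, huniq⟩ := h
  refine ⟨wimg Φp α n q₀, ⟨wimg_fst_mem hΦp h0 hcrys hrefl htri hnn hαp n hq₀p, ?_⟩, ?_⟩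
  · have hiff := sep_reflct_iff hΦp h0 hcrys hrefl htri hnn hαp n
      (wimg_fst_mem hΦp h0 hcrys hrefl htri hnn hαp n hq₀p) ((wimg Φp α n q₀).2) A C
    rw [Prod.mk.eta] at hiff
    rw [wimg_invol hΦp h0 hcrys hrefl htri hnn hαp n hq₀p] at hiff
    exact hiff.mpr hq₀s
  · rintro q ⟨hqp, hqs⟩
    have hiff := sep_reflct_iff hΦp h0 hcrys hrefl htri hnn hαp n (β := q.1) hqp q.2 A C
    rw [Prod.mk.eta] at hiff
    have hsq : Separates (wimg Φp α n q).1 (wimg Φp α n q).2 A C := hiff.mp hqs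
    have heq := huniq (wimg Φp α n q)
      ⟨wimg_fst_mem hΦp h0 hcrys hrefl htri hnn hαp n hqp, hsq⟩
    have h2 := congrArg (wimg Φp α n) heq
    rw [wimg_invol hΦp h0 hcrys hrefl htri hnn hαp n hqp] at h2
    exact h2

/-! ### Reflecting an alcove across one of its walls -/

lemma reflct_adj_eq {Φ Φp : Finset (EuclideanSpace ℝ (Fin r))}
    (hΦp : ↑Φp ⊆ (Φ : Set (EuclideanSpace ℝ (Fin r)))) (h0 : (0 : V) ∉ Φ)
    (hcrys : ∀ α ∈ Φ, ∀ β ∈ Φ, ∃ k : ℤ, pairing β α = (k : ℝ))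
    (hrefl : ∀ α ∈ Φ, ∀ β ∈ Φ, β - pairing β α • α ∈ Φ)
    (htri : ∀ γ ∈ Φ, γ ∈ Φp ∨ -γ ∈ Φp)
    (hnn : ∀ γ ∈ Φp, -γ ∉ Φp)
    {α : V} (hαp : α ∈ Φp) (n : ℤ)  {A C : Set (EuclideanSpace ℝ (Fin r))}
    (hA : IsAlcove Φp A) (hC : IsAlcove Φp C)
    (huniq : ∀ q : (EuclideanSpace ℝ (Fin r)) × ℤ, q.1 ∈ Φp → Separates q.1 q.2 A C →
      q = (α, n))
    (hsep : Separates α n A C) :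
    reflct α (n : ℝ) '' C = A := by
  classical
  have hαα := inner_self_ne h0 (hΦp hαp)
  obtain ⟨a, ha⟩ := hA.nonempty'
  obtain ⟨b, hb⟩ := hC.nonempty'
  have hsepab : (pairing a α < n ∧ (n : ℝ) < pairing b α) ∨
      (pairing b α < n ∧ (n : ℝ) < pairing a α) := by
    rcases hsep with ⟨h1, h2⟩ | ⟨h1, h2⟩
    · exact Or.inl ⟨h1 a ha, h2 b hb⟩
    · exact Or.inr ⟨h2 b hb, h1 a ha⟩
  have hden : pairing b α - pairing a α ≠ 0 := by
    rcases hsepab with ⟨h1, h2⟩ | ⟨h1, h2⟩ <;> intro hcon <;> nlinarith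
  set t : ℝ := ((n : ℝ) - pairing a α) / (pairing b α - pairing a α) with htdef
  have ht01 : 0 < t ∧ t < 1 := by
    rcases hsepab with ⟨h1, h2⟩ | ⟨h1, h2⟩
    · constructor
      · apply div_pos <;> linarith
      · rw [htdef, div_lt_one (by linarith)]
        linarith
    · have ht' : t = (pairing a α - n) / (pairing a α - pairing b α) := by
        rw [htdef, ← neg_div_neg_eq]
        ring_nf
      constructor
      · rw [ht']
        apply div_pos <;> linarith
      · rw [ht', div_lt_one (by linarith)]
        linarith
  set z : EuclideanSpace ℝ (Fin r) := (1 - t) • a + t • b with hzdef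
  have hzp : ∀ γ : EuclideanSpace ℝ (Fin r),
      pairing z γ = (1 - t) * pairing a γ + t * pairing b γ := fun γ => by
    rw [hzdef, pairing_smul_add]
  have hzα : pairing z α = (n : ℝ) := by
    rw [hzp α, htdef]
    field_simp
    ring
  have hside : ∀ q : (EuclideanSpace ℝ (Fin r)) × ℤ, q.1 ∈ Φp → q ≠ (α, n) →
      ((pairing a q.1 < q.2 ∧ pairing b q.1 < q.2 ∧ pairing z q.1 < q.2) ∨
       ((q.2 : ℝ) < pairing a q.1 ∧ (q.2 : ℝ) < pairing b q.1 ∧ (q.2 : ℝ) < pairing z q.1)) := by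
    rintro ⟨β, m⟩ hβ hne
    have hns : ¬ Separates β m A C := fun hs => hne (huniq (β, m) hβ hs)
    rcases hA.dichotomy hβ m with hA' | hA' <;> rcases hC.dichotomy hβ m with hC' | hC'
    · left
      have h1 := hA' a ha
      have h2 := hC' b hb
      exact ⟨h1, h2, by
        rw [hzp β]
        exact comb_lt h1 h2 (by linarith [ht01.2]) (le_of_lt ht01.1) (by ring)⟩
    · exact absurd (Or.inl ⟨hA', hC'⟩) hns
    · exact absurd (Or.inr ⟨hA', hC'⟩) hns
    · right
      have h1 := hA' a ha
      have h2 := hC' b hb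
      refine ⟨h1, h2, ?_⟩
      rw [hzp β]
      have hcb := comb_lt (s := 1 - t) (t := t) (p := -pairing a (β, m).1)
        (q := -pairing b (β, m).1) (m := -(m : ℝ)) (neg_lt_neg h1) (neg_lt_neg h2)
        (by linarith [ht01.2]) (le_of_lt ht01.1) (by ring)
      linarith
  have hrbmem : reflct α (n : ℝ) b ∈ A := by
    apply hA.mem_of_sides ha
    intro β hβ m
    by_cases hq : ((β, m) : (EuclideanSpace ℝ (Fin r)) × ℤ) = (α, n)
    · have hβα : β = α := congrArg Prod.fst hq
      have hmn : m = n := congrArg Prod.snd hq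
      subst hβα
      subst hmn
      rw [pairing_reflct_alpha hαα]
      rcases hsepab with ⟨h1, h2⟩ | ⟨h1, h2⟩
      · exact ⟨fun _ => by linarith, fun h => by linarith⟩
      · exact ⟨fun h => by linarith, fun _ => by linarith⟩
    · have hq'p : (wimg Φp α n (β, m)).1 ∈ Φp :=
        wimg_fst_mem hΦp h0 hcrys hrefl htri hnn hαp n hβ
      have hq'ne : wimg Φp α n (β, m) ≠ (α, n) := by
        intro hcon
        apply hq
        have hinv := wimg_invol hΦp h0 hcrys hrefl htri hnn hαp n (q := (β, m)) hβ
        rw [hcon] at hinv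
        rw [← hinv]
        exact wimg_self hΦp h0 hcrys hrefl htri hnn hαp n
      have hs1 := hside (β, m) hβ hq
      have hs2 := hside (wimg Φp α n (β, m)) hq'p hq'ne
      rcases wimg_shift hΦp h0 hcrys hrefl htri hnn hαp n hβ m with hsh | hsh
      · have hb' := hsh b
        have hz' := hsh z
        rw [reflct_fix hzα] at hz'
        constructor
        · intro haβ
          rcases hs1 with ⟨_, _, hz1⟩ | ⟨ha1, _, _⟩
          · rcases hs2 with ⟨_, hb2, _⟩ | ⟨_, _, hz2⟩
            · linarith
            · linarith
          · linarith
        · intro haβ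
          rcases hs1 with ⟨ha1, _, _⟩ | ⟨_, _, hz1⟩
          · linarith
          · rcases hs2 with ⟨_, _, hz2⟩ | ⟨_, hb2, _⟩
            · linarith
            · linarith
      · have hb' := hsh b
        have hz' := hsh z
        rw [reflct_fix hzα] at hz'
        constructor
        · intro haβ
          rcases hs1 with ⟨_, _, hz1⟩ | ⟨ha1, _, _⟩
          · rcases hs2 with ⟨_, _, hz2⟩ | ⟨_, hb2, _⟩
            · linarith
            · linarith
          · linarith
        · intro haβ
          rcases hs1 with ⟨ha1, _, _⟩ | ⟨_, _, hz1⟩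
          · linarith
          · rcases hs2 with ⟨_, hb2, _⟩ | ⟨_, _, hz2⟩
            · linarith
            · linarith
  have himg : IsAlcove Φp (reflct α (n : ℝ) '' C) :=
    reflct_alcove hΦp h0 hcrys hrefl htri hαp n hC
  exact himg.eq_of_mem hA ⟨b, hb, rfl⟩ hrbmem

/-! ### Galleries -/

inductive Gal {W : Type*} (adj : W → W → Prop) : W → W → ℕ → Prop
  | nil (v : W) : Gal adj v v 0
  | cons {v u w : W} {k : ℕ} : adj v u → Gal adj u w k → Gal adj v w (k + 1)

lemma Gal.snoc {W : Type*} {adj : W → W → Prop} {v u w : W} {k : ℕ}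
    (h : Gal adj v u k) (h' : adj u w) : Gal adj v w (k + 1) := by
  induction h with
  | nil v => exact .cons h' (.nil w)
  | cons ha _ ih => exact .cons ha (ih h')

lemma Gal.map {W : Type*} {adj adj' : W → W → Prop} {ρ : W → W}
    (h1 : ∀ a b, adj a b → adj' (ρ a) (ρ b)) {v w : W} {k : ℕ}
    (h : Gal adj v w k) : Gal adj' (ρ v) (ρ w) k := by
  induction h with
  | nil v => exact .nil _
  | cons ha _ ih => exact .cons (h1 _ _ ha) ih

lemma Gal.fold {W : Type*} {adj : W → W → Prop} {Sd : W → Prop} {ρ : W → W}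
    (h1 : ∀ a b, adj a b → adj (ρ a) (ρ b))
    (hcross : ∀ a b, adj a b → ¬(Sd a ↔ Sd b) → ρ b = a)
    {k : ℕ} {v w : W} (h : Gal adj v w k) :
    ¬(Sd v ↔ Sd w) → ∃ k' < k, Gal adj v (ρ w) k' := by
  induction h with
  | nil v =>
    intro hs
    exact absurd Iff.rfl hs
  | @cons v u w k ha hg ih =>
    intro hs
    by_cases hvu : Sd v ↔ Sd u
    · have hs2 : ¬(Sd u ↔ Sd w) := by tauto
      obtain ⟨k', hk', g'⟩ := ih hs2
      exact ⟨k' + 1, by omega, .cons ha g'⟩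
    · have hρ : ρ u = v := hcross _ _ ha hvu
      have hmap := hg.map h1
      rw [hρ] at hmap
      exact ⟨k, by omega, hmap⟩

lemma gal_of_word {B' W : Type*} [Group W] {M : CoxeterMatrix B'} (cs : CoxeterSystem M W)
    {adj : W → W → Prop} (hstep : ∀ (i : B') (w : W), adj w (cs.simple i * w)) :
    ∀ (ω : List B') (v : W), Gal adj v (cs.wordProd ω * v) ω.length := by
  intro ω
  induction ω with
  | nil =>
    intro v
    simpa [CoxeterSystem.wordProd_nil] using Gal.nil (adj := adj) v
  | cons j ω ih =>
    intro v
    have h1 := (ih v).snoc (hstep j (cs.wordProd ω * v))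
    have heq : cs.simple j * (cs.wordProd ω * v) = cs.wordProd (j :: ω) * v := by
      rw [cs.wordProd_cons, mul_assoc]
    rw [heq] at h1
    exact h1

lemma gal_length {B' W : Type*} [Group W] {M : CoxeterMatrix B'} (cs : CoxeterSystem M W)
    {adj : W → W → Prop} (hs : ∀ a b, adj a b → ∃ i, b = cs.simple i * a)
    {v w : W} {k : ℕ} (h : Gal adj v w k) : cs.length (w * v⁻¹) ≤ k := by
  induction h with
  | nil v => simp
  | @cons v u w k ha hg ih =>
    obtain ⟨i, hi⟩ := hs _ _ ha
    have h2 : w * v⁻¹ = (w * u⁻¹) * cs.simple i := by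
      rw [hi]
      group
    calc cs.length (w * v⁻¹) = cs.length ((w * u⁻¹) * cs.simple i) := by rw [h2]
      _ ≤ cs.length (w * u⁻¹) + cs.length (cs.simple i) := cs.length_mul_le _ _
      _ ≤ k + 1 := by rw [cs.length_simple]; omega

/-- Let `W` be an affine Weyl group acting on alcoves, `x, y ∈ W`,
`s ∈ S` with `xs > x`.  Then `I_{x, sy} ⊆ I_{xs, y}`. -/
theorem stmt15 {B W : Type*} [Group W] {M : CoxeterMatrix B} (cs : CoxeterSystem M W)
    (hr : 1 ≤ r)
    (Φ Φp : Finset (EuclideanSpace ℝ (Fin r)))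
    (hΦp : ↑Φp ⊆ (Φ : Set (EuclideanSpace ℝ (Fin r))))
    (h0 : (0 : EuclideanSpace ℝ (Fin r)) ∉ Φ)
    (hneg : ∀ α ∈ Φ, -α ∈ Φ)
    (hspan : Submodule.span ℝ (Φ : Set (EuclideanSpace ℝ (Fin r))) = ⊤)
    (hred : ∀ α ∈ Φ, ∀ t : ℝ, t • α ∈ Φ → t = 1 ∨ t = -1)
    (hcrys : ∀ α ∈ Φ, ∀ β ∈ Φ, ∃ k : ℤ, pairing β α = (k : ℝ))
    (hrefl : ∀ α ∈ Φ, ∀ β ∈ Φ, β - pairing β α • α ∈ Φ)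
    (hirr : ∀ Φ₁ Φ₂ : Finset (EuclideanSpace ℝ (Fin r)),
      (Φ : Set (EuclideanSpace ℝ (Fin r))) = ↑Φ₁ ∪ ↑Φ₂ →
      (∀ α ∈ Φ₁, ∀ β ∈ Φ₂, ⟪α, β⟫ = (0 : ℝ)) → Φ₁ = ∅ ∨ Φ₂ = ∅)
    (hpos : ∃ f : EuclideanSpace ℝ (Fin r) →ₗ[ℝ] ℝ,
      (∀ α ∈ Φ, f α ≠ 0) ∧ ∀ α ∈ Φ, (α ∈ Φp ↔ 0 < f α))
    (e : W ≃ {A : Set (EuclideanSpace ℝ (Fin r)) // IsAlcove Φp A})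
    (he1 : ((e 1 : {A // IsAlcove Φp A}) : Set (EuclideanSpace ℝ (Fin r))) = fundAlcove Φp)
    (hadj : ∀ (i : B) (w : W), ∃! q : EuclideanSpace ℝ (Fin r) × ℤ,
      q.1 ∈ Φp ∧ Separates q.1 q.2 (↑(e w)) (↑(e (cs.simple i * w))))
    (hadj' : ∀ w u : W, (∃! q : EuclideanSpace ℝ (Fin r) × ℤ,
      q.1 ∈ Φp ∧ Separates q.1 q.2 (↑(e w)) (↑(e u))) → ∃ i : B, u = cs.simple i * w)
    (x y : W) (i : B)
    (hxs : cs.length (x * cs.simple i) = cs.length x + 1) :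
    Iset cs Φp e x (cs.simple i * y) ⊆ Iset cs Φp e (x * cs.simple i) y := by
  classical
  obtain ⟨f, hf0, hfP⟩ := hpos
  have htri : ∀ γ ∈ Φ, γ ∈ Φp ∨ -γ ∈ Φp := by
    intro γ hγ
    rcases lt_trichotomy (f γ) 0 with h | h | h
    · right
      rw [hfP (-γ) (hneg γ hγ), map_neg]
      linarith
    · exact absurd h (hf0 γ hγ)
    · left
      exact (hfP γ hγ).mpr h
  have hnn : ∀ γ ∈ Φp, -γ ∉ Φp := by
    intro γ hγ hcon
    have hγΦ : γ ∈ Φ := hΦp hγ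
    have hh1 := (hfP γ hγΦ).mp hγ
    have hh2 := (hfP (-γ) (hneg γ hγΦ)).mp hcon
    rw [map_neg] at hh2
    linarith
  intro β hβmem
  obtain ⟨hβp, n, h1, h2⟩ := hβmem
  have hββ := inner_self_ne h0 (hΦp hβp)
  set SdP : W → Prop := fun w => Bel β (n : ℝ) (↑(e w)) with hSdP
  have hdich : ∀ w : W, SdP w ∨ Abv β (n : ℝ) (↑(e w)) :=
    fun w => (e w).2.dichotomy hβp n
  have hnemp : ∀ w : W, ((e w : Set (EuclideanSpace ℝ (Fin r)))).Nonempty :=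
    fun w => (e w).2.nonempty'
  have hsep_iff : ∀ w w' : W, Separates β n (↑(e w)) (↑(e w')) ↔ ¬ (SdP w ↔ SdP w') := by
    intro w w'
    rw [separates_iff]
    constructor
    · rintro (⟨ha, hb⟩ | ⟨ha, hb⟩) hiff
      · exact not_bel_abv (hnemp w') ⟨hiff.mp ha, hb⟩
      · exact not_bel_abv (hnemp w) ⟨hiff.mpr hb, ha⟩
    · intro hni
      rcases hdich w with hw | hw <;> rcases hdich w' with hw' | hw'
      · exact absurd ⟨fun _ => hw', fun _ => hw⟩ hni
      · exact Or.inl ⟨hw, hw'⟩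
      · exact Or.inr ⟨hw, hw'⟩
      · exact absurd ⟨fun h => (not_bel_abv (hnemp w) ⟨h, hw⟩).elim,
          fun h => (not_bel_abv (hnemp w') ⟨h, hw'⟩).elim⟩ hni
  by_cases hc : Separates β n (↑(e y)) (↑(e (cs.simple i * y)))
  · exfalso
    set adjP : W → W → Prop := fun u u' => ∃! q : (EuclideanSpace ℝ (Fin r)) × ℤ,
      q.1 ∈ Φp ∧ Separates q.1 q.2 (↑(e u)) (↑(e u')) with hadjPdef
    have halc : ∀ w : W, IsAlcove Φp (reflct β (n : ℝ) '' ↑(e w)) :=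
      fun w => reflct_alcove hΦp h0 hcrys hrefl htri hβp n (e w).2
    set ρ : W → W := fun w => e.symm ⟨reflct β (n : ℝ) '' ↑(e w), halc w⟩ with hρdef
    have heρ : ∀ w : W, (↑(e (ρ w)) : Set (EuclideanSpace ℝ (Fin r))) =
        reflct β (n : ℝ) '' ↑(e w) := by
      intro w
      rw [hρdef]
      simp only
      rw [Equiv.apply_symm_apply]
    have hρinv : ∀ w : W, ρ (ρ w) = w := by
      intro w
      have hcoe : (↑(e (ρ (ρ w))) : Set (EuclideanSpace ℝ (Fin r))) = ↑(e w) := by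
        rw [heρ, heρ, Set.image_image]
        have hid : ∀ a : EuclideanSpace ℝ (Fin r),
            reflct β (n : ℝ) (reflct β (n : ℝ) a) = a := fun a => reflct_invol hββ _ _
        simp [hid]
      exact e.injective (Subtype.ext hcoe)
    have hadjρ : ∀ a b, adjP a b → adjP (ρ a) (ρ b) := by
      intro a b hab
      have h' := exu_reflct hΦp h0 hcrys hrefl htri hnn hβp n hab
      show ∃! q : (EuclideanSpace ℝ (Fin r)) × ℤ,
        q.1 ∈ Φp ∧ Separates q.1 q.2 (↑(e (ρ a))) (↑(e (ρ b)))
      rw [heρ a, heρ b]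
      exact h'
    have hcrossρ : ∀ a b, adjP a b → ¬(SdP a ↔ SdP b) → ρ b = a := by
      intro a b hab hsd
      have hsep' : Separates β n (↑(e a)) (↑(e b)) := (hsep_iff a b).mpr hsd
      obtain ⟨q₀, hq₀, hun⟩ := hab
      have huq : ∀ q : (EuclideanSpace ℝ (Fin r)) × ℤ, q.1 ∈ Φp →
          Separates q.1 q.2 (↑(e a)) (↑(e b)) → q = (β, n) := by
        intro q hq hsq
        rw [hun q ⟨hq, hsq⟩, ← hun (β, n) ⟨hβp, hsep'⟩]
      have himg := reflct_adj_eq hΦp h0 hcrys hrefl htri hnn hβp n (e a).2 (e b).2 huq hsep'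
      apply e.injective
      apply Subtype.ext
      rw [heρ b]
      exact himg
    obtain ⟨ω, hωlen, hωprod⟩ := cs.exists_reduced_word x
    have g1 : Gal adjP (cs.simple i * y) (cs.wordProd ω * (cs.simple i * y)) ω.length :=
      gal_of_word cs (fun j w => hadj j w) ω (cs.simple i * y)
    rw [← hωprod] at g1
    have hS2 : ¬ (SdP (cs.simple i * y) ↔ SdP (x * (cs.simple i * y))) :=
      (hsep_iff _ _).mp h2
    obtain ⟨k, hk, g2⟩ := Gal.fold hadjρ hcrossρ g1 hS2
    have hρsy : ρ (cs.simple i * y) = y :=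
      hcrossρ y (cs.simple i * y) (hadj i y) ((hsep_iff _ _).mp hc)
    have g3 := g2.map (adj' := adjP) hadjρ
    rw [hρsy, hρinv] at g3
    have hlen := gal_length cs (fun a b hab => hadj' a b hab) g3
    have hxy : (x * (cs.simple i * y)) * y⁻¹ = x * cs.simple i := by group
    rw [hxy, hxs] at hlen
    have hωl : ω.length = cs.length x := by rw [hωprod]; exact hωlen.eq.symm
    omega
  · have hyy : SdP y ↔ SdP (cs.simple i * y) := by
      by_contra hcon
      exact hc ((hsep_iff _ _).mpr hcon)
    refine ⟨hβp, n, ?_, ?_⟩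
    · apply (hsep_iff 1 y).mpr
      have h1' := (hsep_iff 1 (cs.simple i * y)).mp h1
      tauto
    · rw [mul_assoc]
      apply (hsep_iff y (x * (cs.simple i * y))).mpr
      have h2' := (hsep_iff (cs.simple i * y) (x * (cs.simple i * y))).mp h2
      tauto


end

end Stmt15
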